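/- Let a, b ∈ ℝ^n be nonnegative nonincreasing vectors with ∑_{i=1}^k b_i ≤ ∑_{i=1}^k a_i for all k < n and ∑_{i=1}^n b_i = ∑_{i=1}^n a_i. Then there exists a doubly stochastic matrix A which is monotone (maps nonnegative nonincreasing vectors to nonincreasing vectors) such that Aa = b. -/

import Mathlib

def DoublyStochastic {n : ℕ} (A : Matrix (Fin n) (Fin n) ℝ) : Prop :=
  (∀ i j, 0 ≤ A i j) ∧ (∀ i, ∑ j, A i j = 1) ∧ (∀ j, ∑ i, A i j = 1)

/-- A matrix is monotone if it maps nonnegative nonincreasing vectors to nonincreasing vectors. -/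
def MonotoneMatrix {n : ℕ} (A : Matrix (Fin n) (Fin n) ℝ) : Prop :=
  ∀ x : Fin n → ℝ, (∀ i, 0 ≤ x i) → (∀ i j : Fin n, i ≤ j → x j ≤ x i) →
    ∀ i j : Fin n, i ≤ j → A.mulVec x j ≤ A.mulVec x i

set_option maxHeartbeats 1000000
lemma Iic_eq_filter {n : ℕ} (m : Fin n) : Finset.Iic m = Finset.univ.filter (· ≤ m) := by
  ext i; simp

lemma sum_Iic_eq {n : ℕ} (f : Fin n → ℝ) (m : Fin n) :
    ∑ i ∈ Finset.Iic m, f i = ∑ i, if i ≤ m then f i else 0 := by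
  rw [Iic_eq_filter, Finset.sum_filter]

/-- the matrix averaging the coordinates `Iic u` and leaving the rest unchanged -/
noncomputable def avgM {n : ℕ} (u : Fin n) : Matrix (Fin n) (Fin n) ℝ :=
  Matrix.of fun i j =>
    if i ≤ u then (if j ≤ u then ((u.val : ℝ) + 1)⁻¹ else 0) else (if j = i then 1 else 0)

lemma avgM_apply {n : ℕ} (u i j : Fin n) : avgM u i j =
    if i ≤ u then (if j ≤ u then ((u.val : ℝ) + 1)⁻¹ else 0) else (if j = i then 1 else 0) := rfl

lemma upos {n : ℕ} (u : Fin n) : (0:ℝ) < (u.val : ℝ) + 1 := by positivity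

lemma avgM_nonneg {n : ℕ} (u : Fin n) : ∀ i j, 0 ≤ avgM u i j := by
  intro i j
  rw [avgM_apply]
  split <;> split <;> first | positivity | norm_num

lemma sum_ite_Iic {n : ℕ} (u : Fin n) (c : ℝ) :
    ∑ j : Fin n, (if j ≤ u then c else 0) = ((u.val : ℝ) + 1) * c := by
  rw [← sum_Iic_eq (fun _ => c) u, Finset.sum_const, Fin.card_Iic, nsmul_eq_mul]
  push_cast
  ring

lemma avgM_rowsum {n : ℕ} (u : Fin n) (i : Fin n) : ∑ j, avgM u i j = 1 := by
  simp only [avgM_apply]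
  by_cases h : i ≤ u
  · simp only [h, if_true]
    rw [sum_ite_Iic]
    field_simp
  · simp only [h, if_false]
    simp

lemma avgM_colsum {n : ℕ} (u : Fin n) (j : Fin n) : ∑ i, avgM u i j = 1 := by
  simp only [avgM_apply]
  by_cases h : j ≤ u
  · have : ∀ i : Fin n, (if i ≤ u then (if j ≤ u then ((u.val : ℝ) + 1)⁻¹ else 0)
        else (if j = i then 1 else 0)) = (if i ≤ u then ((u.val : ℝ) + 1)⁻¹ else 0) := by
      intro i
      by_cases hi : i ≤ u
      · simp [hi, h]
      · have : j ≠ i := fun hji => hi (hji ▸ h)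
        simp [hi, this]
    rw [Finset.sum_congr rfl fun i _ => this i, sum_ite_Iic]
    field_simp
  · have : ∀ i : Fin n, (if i ≤ u then (if j ≤ u then ((u.val : ℝ) + 1)⁻¹ else 0)
        else (if j = i then 1 else 0)) = (if j = i then 1 else 0) := by
      intro i
      by_cases hi : i ≤ u
      · have : j ≠ i := fun hji => h (hji ▸ hi)
        simp [hi, h, this]
      · simp [hi]
    rw [Finset.sum_congr rfl fun i _ => this i]
    simp

lemma avgM_DS {n : ℕ} (u : Fin n) : DoublyStochastic (avgM u) :=
  ⟨avgM_nonneg u, avgM_rowsum u, avgM_colsum u⟩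

lemma avgM_mulVec {n : ℕ} (u : Fin n) (x : Fin n → ℝ) (i : Fin n) :
    (avgM u).mulVec x i =
      if i ≤ u then ((u.val : ℝ) + 1)⁻¹ * ∑ j ∈ Finset.Iic u, x j else x i := by
  rw [Matrix.mulVec, dotProduct]
  simp only [avgM_apply]
  by_cases h : i ≤ u
  · simp only [h, if_true]
    rw [sum_Iic_eq, Finset.mul_sum]
    congr 1
    ext j
    by_cases hj : j ≤ u <;> simp [hj]
  · simp only [h, if_false]
    rw [Finset.sum_eq_single i]
    · simp
    · intro j _ hji; simp [hji]
    · intro hh; exact absurd (Finset.mem_univ i) hh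

lemma Iic_union_Ioc {n : ℕ} {u k : Fin n} (h : u ≤ k) :
    Finset.Iic u ∪ Finset.Ioc u k = Finset.Iic k := by
  ext i
  simp only [Finset.mem_union, Finset.mem_Iic, Finset.mem_Ioc]
  constructor
  · rintro (hi | ⟨_, hi⟩)
    · exact le_trans hi h
    · exact hi
  · intro hi
    rcases le_or_gt i u with h' | h'
    · exact Or.inl h'
    · exact Or.inr ⟨h', hi⟩

lemma sum_Iic_split {n : ℕ} {u k : Fin n} (h : u ≤ k) (f : Fin n → ℝ) :
    ∑ i ∈ Finset.Iic k, f i = ∑ i ∈ Finset.Iic u, f i + ∑ i ∈ Finset.Ioc u k, f i := by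
  rw [← Iic_union_Ioc h, Finset.sum_union]
  rw [Finset.disjoint_left]
  intro i hi hi'
  simp only [Finset.mem_Iic] at hi
  simp only [Finset.mem_Ioc] at hi'
  exact absurd hi (not_le.mpr hi'.1)

/-- the average of the first u+1 entries of a sorted vector dominates x j for u ≤ j -/
lemma avg_ge {n : ℕ} (u : Fin n) (x : Fin n → ℝ) (hxs : ∀ i j : Fin n, i ≤ j → x j ≤ x i)
    {j : Fin n} (hj : u ≤ j) : x j ≤ ((u.val : ℝ) + 1)⁻¹ * ∑ m ∈ Finset.Iic u, x m := by
  rw [inv_mul_eq_div, le_div_iff₀ (upos u)]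
  have : ∀ m ∈ Finset.Iic u, x j ≤ x m := by
    intro m hm
    exact hxs m j (le_trans (Finset.mem_Iic.mp hm) hj)
  calc x j * ((u.val:ℝ) + 1) = ∑ _m ∈ Finset.Iic u, x j := by
        rw [Finset.sum_const, Fin.card_Iic, nsmul_eq_mul]; push_cast; ring
  _ ≤ ∑ m ∈ Finset.Iic u, x m := Finset.sum_le_sum this

lemma avgM_Mon {n : ℕ} (u : Fin n) : MonotoneMatrix (avgM u) := by
  intro x _ hxs i j hij
  rw [avgM_mulVec, avgM_mulVec]
  by_cases hi : i ≤ u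
  · by_cases hj : j ≤ u
    · simp [hi, hj]
    · simp only [hi, hj, if_true, if_false]
      exact avg_ge u x hxs (le_of_not_ge hj)
  · have hj : ¬ j ≤ u := fun hj => hi (le_trans hij hj)
    simp only [hi, hj, if_false]
    exact hxs i j hij

lemma avgM_prefix {n : ℕ} (u : Fin n) (x : Fin n → ℝ) {k : Fin n} (h : u ≤ k) :
    ∑ i ∈ Finset.Iic k, (avgM u).mulVec x i = ∑ i ∈ Finset.Iic k, x i := by
  rw [sum_Iic_split h, sum_Iic_split h]
  congr 1
  · have h1 : ∀ i ∈ Finset.Iic u, (avgM u).mulVec x i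
        = ((u.val : ℝ) + 1)⁻¹ * ∑ m ∈ Finset.Iic u, x m := by
      intro i hi
      rw [avgM_mulVec]
      simp [Finset.mem_Iic.mp hi]
    rw [Finset.sum_congr rfl h1, Finset.sum_const, Fin.card_Iic, nsmul_eq_mul]
    push_cast
    field_simp
  · apply Finset.sum_congr rfl
    intro i hi
    rw [avgM_mulVec]
    have : ¬ i ≤ u := not_le.mpr (Finset.mem_Ioc.mp hi).1
    simp [this]

lemma DS_mul {n : ℕ} {A B : Matrix (Fin n) (Fin n) ℝ}
    (hA : DoublyStochastic A) (hB : DoublyStochastic B) : DoublyStochastic (A * B) := by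
  obtain ⟨hA0, hAr, hAc⟩ := hA
  obtain ⟨hB0, hBr, hBc⟩ := hB
  refine ⟨fun i j => ?_, fun i => ?_, fun j => ?_⟩
  · rw [Matrix.mul_apply]
    exact Finset.sum_nonneg fun k _ => mul_nonneg (hA0 i k) (hB0 k j)
  · rw [show (A * B) = A * B from rfl]
    simp only [Matrix.mul_apply]
    rw [Finset.sum_comm]
    simp_rw [← Finset.mul_sum, hBr]
    simpa using hAr i
  · simp only [Matrix.mul_apply]
    rw [Finset.sum_comm]
    simp_rw [← Finset.sum_mul, hAc]
    simpa using hBc j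

lemma Mon_mul {n : ℕ} {A B : Matrix (Fin n) (Fin n) ℝ}
    (hA : MonotoneMatrix A) (hB : MonotoneMatrix B) (hB0 : ∀ i j, 0 ≤ B i j) :
    MonotoneMatrix (A * B) := by
  intro x hx0 hxs i j hij
  have h1 : ∀ i, 0 ≤ B.mulVec x i := fun i => by
    rw [Matrix.mulVec, dotProduct]
    exact Finset.sum_nonneg fun k _ => mul_nonneg (hB0 i k) (hx0 k)
  have h2 := hB x hx0 hxs
  have := hA (B.mulVec x) h1 h2 i j hij
  rwa [Matrix.mulVec_mulVec] at this

lemma DS_convex {n : ℕ} {A B : Matrix (Fin n) (Fin n) ℝ} {t : ℝ}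
    (hA : DoublyStochastic A) (hB : DoublyStochastic B) (ht0 : 0 ≤ t) (ht1 : t ≤ 1) :
    DoublyStochastic ((1 - t) • A + t • B) := by
  obtain ⟨hA0, hAr, hAc⟩ := hA
  obtain ⟨hB0, hBr, hBc⟩ := hB
  refine ⟨fun i j => ?_, fun i => ?_, fun j => ?_⟩
  · have : (0:ℝ) ≤ 1 - t := by linarith
    simpa using add_nonneg (mul_nonneg this (hA0 i j)) (mul_nonneg ht0 (hB0 i j))
  · simp only [Matrix.add_apply, Matrix.smul_apply, smul_eq_mul]
    rw [Finset.sum_add_distrib, ← Finset.mul_sum, ← Finset.mul_sum, hAr, hBr]; ring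
  · simp only [Matrix.add_apply, Matrix.smul_apply, smul_eq_mul]
    rw [Finset.sum_add_distrib, ← Finset.mul_sum, ← Finset.mul_sum, hAc, hBc]; ring

lemma Mon_convex {n : ℕ} {A B : Matrix (Fin n) (Fin n) ℝ} {t : ℝ}
    (hA : MonotoneMatrix A) (hB : MonotoneMatrix B) (ht0 : 0 ≤ t) (ht1 : t ≤ 1) :
    MonotoneMatrix ((1 - t) • A + t • B) := by
  intro x hx0 hxs i j hij
  have hAm := hA x hx0 hxs i j hij
  have hBm := hB x hx0 hxs i j hij
  simp only [Matrix.add_mulVec, Matrix.smul_mulVec, Pi.add_apply, Pi.smul_apply,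
    smul_eq_mul]
  have h1 : (0:ℝ) ≤ 1 - t := by linarith
  exact add_le_add (mul_le_mul_of_nonneg_left hAm h1) (mul_le_mul_of_nonneg_left hBm ht0)


lemma Iic_zero_fin {n : ℕ} : Finset.Iic (0 : Fin (n+1)) = {0} := by
  ext i
  simp [Fin.le_zero_iff]

lemma Iic_last_fin {n : ℕ} : Finset.Iic (Fin.last n) = Finset.univ := by
  simp [Finset.eq_univ_iff_forall, Fin.le_last]

lemma mulVec_convex {n : ℕ} (A B : Matrix (Fin n) (Fin n) ℝ) (t : ℝ) (x : Fin n → ℝ) (i : Fin n) :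
    ((1 - t) • A + t • B).mulVec x i = (1 - t) * (A.mulVec x i) + t * (B.mulVec x i) := by
  simp [Matrix.add_mulVec, Matrix.smul_mulVec]

lemma step {n : ℕ} (a : Fin (n+1) → ℝ) (β : ℝ) (ha0 : ∀ i, 0 ≤ a i)
    (haA : ∀ i j : Fin (n+1), i ≤ j → a j ≤ a i) (hβ0 : 0 ≤ β) (hβa : β ≤ a 0)
    (hβs : ∑ i, a i ≤ ((n:ℝ)+1) * β) :
    ∃ M : Matrix (Fin (n+1)) (Fin (n+1)) ℝ, DoublyStochastic M ∧ MonotoneMatrix M ∧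
      (M.mulVec a) 0 = β ∧ (∀ i, 0 ≤ M.mulVec a i) ∧
      (∀ i j : Fin (n+1), i ≤ j → M.mulVec a j ≤ M.mulVec a i) ∧
      (∀ k, (∑ i ∈ Finset.Iic k, M.mulVec a i = ((k.val:ℝ)+1) * β) ∨
            (∑ i ∈ Finset.Iic k, M.mulVec a i = ∑ i ∈ Finset.Iic k, a i)) ∧
      (∑ i, M.mulVec a i = ∑ i, a i) := by
  classical
  set S : Finset (Fin (n+1)) :=
    Finset.univ.filter (fun u => ((u.val:ℝ)+1) * β ≤ ∑ j ∈ Finset.Iic u, a j) with hS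
  have h0S : (0 : Fin (n+1)) ∈ S := by
    rw [hS, Finset.mem_filter]
    refine ⟨Finset.mem_univ _, ?_⟩
    rw [Iic_zero_fin, Finset.sum_singleton]
    simpa using hβa
  have hSne : S.Nonempty := ⟨0, h0S⟩
  set u := S.max' hSne with hu
  have huS : u ∈ S := S.max'_mem hSne
  have hug : ((u.val:ℝ)+1) * β ≤ ∑ j ∈ Finset.Iic u, a j := by
    rw [hS, Finset.mem_filter] at huS
    exact huS.2
  by_cases hul : u = Fin.last n
  · -- full averaging
    refine ⟨avgM u, avgM_DS u, avgM_Mon u, ?_⟩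
    have htot : ∑ i, a i = ((n:ℝ)+1) * β := by
      apply le_antisymm hβs
      rw [hul, Iic_last_fin] at hug
      simpa [Fin.val_last] using hug
    have hy : ∀ i, (avgM u).mulVec a i = β := by
      intro i
      rw [avgM_mulVec]
      have hi : i ≤ u := hul ▸ Fin.le_last i
      rw [if_pos hi, hul]
      rw [Iic_last_fin, htot]
      rw [Fin.val_last]
      field_simp
    refine ⟨hy 0, fun i => (hy i) ▸ hβ0, fun i j _ => by rw [hy i, hy j], fun k => ?_, ?_⟩
    · left
      rw [Finset.sum_congr rfl fun i _ => hy i, Finset.sum_const, Fin.card_Iic, nsmul_eq_mul]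
      push_cast; ring
    · rw [Finset.sum_congr rfl fun i _ => hy i, Finset.sum_const, htot]
      simp [Fintype.card_fin]
  · -- two-block mix
    have hulast : u < Fin.last n := lt_of_le_of_ne (Fin.le_last u) hul
    set v : Fin (n+1) := u + 1 with hv
    have hvval : v.val = u.val + 1 := Fin.val_add_one_of_lt hulast
    have huv : u < v := by
      rw [Fin.lt_def, hvval]; omega
    have hvS : v ∉ S := fun hvS => absurd (S.le_max' v hvS) (not_le.mpr huv)
    have hvg : ∑ j ∈ Finset.Iic v, a j < ((v.val:ℝ)+1) * β := by
      by_contra hc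
      exact hvS (by rw [hS, Finset.mem_filter]; exact ⟨Finset.mem_univ _, not_lt.mp hc⟩)
    set g : ℝ := ((u.val:ℝ)+1)⁻¹ * ∑ j ∈ Finset.Iic u, a j with hg
    set g' : ℝ := ((v.val:ℝ)+1)⁻¹ * ∑ j ∈ Finset.Iic v, a j with hg'
    have hβg : β ≤ g := by
      rw [hg, inv_mul_eq_div, le_div_iff₀ (upos u)]
      linarith [hug]
    have hg'β : g' < β := by
      rw [hg', inv_mul_eq_div, div_lt_iff₀ (upos v)]
      linarith [hvg]
    have hgg' : 0 < g - g' := by linarith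
    set t : ℝ := (g - β) / (g - g') with ht
    have ht0 : 0 ≤ t := div_nonneg (by linarith) (le_of_lt hgg')
    have ht1 : t ≤ 1 := by
      rw [ht, div_le_one hgg']
      linarith
    set M : Matrix (Fin (n+1)) (Fin (n+1)) ℝ := (1 - t) • avgM u + t • avgM v with hM
    have hyv : ∀ i, M.mulVec a i = (1-t) * ((avgM u).mulVec a i) + t * ((avgM v).mulVec a i) :=
      fun i => mulVec_convex _ _ _ _ _
    have key : (1-t) * g + t * g' = β := by
      have : t * (g - g') = g - β := by
        rw [ht, div_mul_cancel₀ _ (ne_of_gt hgg')]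
      nlinarith [this]
    have hav : a v ≤ g' := avg_ge v a haA (le_refl v)
    have hg'0 : 0 ≤ g' := le_trans (ha0 v) hav
    have hyβ : ∀ i, i ≤ u → M.mulVec a i = β := by
      intro i hi
      have hiv : i ≤ v := le_trans hi (le_of_lt huv)
      rw [hyv, avgM_mulVec, avgM_mulVec, if_pos hi, if_pos hiv, ← hg, ← hg', key]
    have hyvv : M.mulVec a v = (1-t) * a v + t * g' := by
      rw [hyv, avgM_mulVec, avgM_mulVec, if_neg (not_le.mpr huv), if_pos (le_refl v), ← hg']
    have hyout : ∀ i, ¬ i ≤ v → M.mulVec a i = a i := by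
      intro i hi
      have hiu : ¬ i ≤ u := fun h => hi (le_trans h (le_of_lt huv))
      rw [hyv, avgM_mulVec, avgM_mulVec, if_neg hiu, if_neg hi]
      ring
    -- classify
    have hmem : ∀ i : Fin (n+1), ¬ i ≤ u → i ≤ v → i = v := by
      intro i h1 h2
      rw [Fin.le_def] at h1 h2
      rw [hvval] at h2
      apply Fin.ext
      rw [hvval]; omega
    have hyvle : M.mulVec a v ≤ g' := by
      rw [hyvv]
      nlinarith [hav, ht0, ht1]
    have hyvge : a v ≤ M.mulVec a v := by
      rw [hyvv]
      nlinarith [hav, ht0, ht1]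
    have hsort : ∀ i j : Fin (n+1), i ≤ j → M.mulVec a j ≤ M.mulVec a i := by
      intro i j hij
      by_cases hi : i ≤ u
      · rw [hyβ i hi]
        by_cases hj : j ≤ u
        · rw [hyβ j hj]
        · by_cases hj2 : j ≤ v
          · rw [hmem j hj hj2]
            linarith [hyvle]
          · rw [hyout j hj2]
            have : a j ≤ a v := haA v j (le_of_not_ge hj2)
            linarith [hav]
      · have hj : ¬ j ≤ u := fun h => hi (le_trans hij h)
        by_cases hi2 : i ≤ v
        · rw [hmem i hi hi2]
          by_cases hj2 : j ≤ v
          · rw [hmem j hj hj2]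
          · rw [hyout j hj2]
            exact le_trans (haA v j (le_of_not_ge hj2)) hyvge
        · have hj2 : ¬ j ≤ v := fun h => hi2 (le_trans hij h)
          rw [hyout i hi2, hyout j hj2]
          exact haA i j hij
    have hpre : ∀ k, (∑ i ∈ Finset.Iic k, M.mulVec a i = ((k.val:ℝ)+1) * β) ∨
        (∑ i ∈ Finset.Iic k, M.mulVec a i = ∑ i ∈ Finset.Iic k, a i) := by
      intro k
      by_cases hk : k ≤ u
      · left
        have : ∀ i ∈ Finset.Iic k, M.mulVec a i = β := fun i hi =>
          hyβ i (le_trans (Finset.mem_Iic.mp hi) hk)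
        rw [Finset.sum_congr rfl this, Finset.sum_const, Fin.card_Iic, nsmul_eq_mul]
        push_cast; ring
      · right
        have huk : u ≤ k := le_of_lt (lt_of_not_ge hk)
        have hvk : v ≤ k := by
          rw [Fin.le_def, hvval]
          rw [Fin.lt_def] at *
          have := lt_of_not_ge hk
          rw [Fin.lt_def] at this
          omega
        have : ∀ i ∈ Finset.Iic k, M.mulVec a i
            = (1-t) * ((avgM u).mulVec a i) + t * ((avgM v).mulVec a i) := fun i _ => hyv i
        rw [Finset.sum_congr rfl this, Finset.sum_add_distrib, ← Finset.mul_sum, ← Finset.mul_sum,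
          avgM_prefix u a huk, avgM_prefix v a hvk]
        ring
    refine ⟨M, DS_convex (avgM_DS u) (avgM_DS v) ht0 ht1,
      Mon_convex (avgM_Mon u) (avgM_Mon v) ht0 ht1, hyβ 0 (Fin.zero_le u), ?_, hsort, hpre, ?_⟩
    · intro i
      by_cases hi : i ≤ u
      · rw [hyβ i hi]; exact hβ0
      · by_cases hi2 : i ≤ v
        · rw [hmem i hi hi2, hyvv]
          nlinarith [ha0 v, hg'0, ht0, ht1]
        · rw [hyout i hi2]; exact ha0 i
    · have hvk : v ≤ Fin.last n := Fin.le_last v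
      have huk : u ≤ Fin.last n := Fin.le_last u
      have hcg : ∀ i ∈ Finset.Iic (Fin.last n), M.mulVec a i
          = (1-t) * ((avgM u).mulVec a i) + t * ((avgM v).mulVec a i) := fun i _ => hyv i
      rw [← Iic_last_fin, Finset.sum_congr rfl hcg, Finset.sum_add_distrib, ← Finset.mul_sum,
        ← Finset.mul_sum, avgM_prefix u a huk, avgM_prefix v a hvk]
      ring

/-- embed a matrix as the lower-right block, with a 1 in the top-left corner -/
def liftMat {n : ℕ} (B : Matrix (Fin n) (Fin n) ℝ) : Matrix (Fin (n+1)) (Fin (n+1)) ℝ :=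
  Matrix.of (Fin.cons (Fin.cons 1 (fun _ => 0)) (fun i => Fin.cons 0 (fun j => B i j)))

lemma liftMat_zero_zero {n : ℕ} (B : Matrix (Fin n) (Fin n) ℝ) : liftMat B 0 0 = 1 := rfl

lemma liftMat_zero_succ {n : ℕ} (B : Matrix (Fin n) (Fin n) ℝ) (j : Fin n) :
    liftMat B 0 j.succ = 0 := by
  simp [liftMat, Matrix.of_apply, Fin.cons_succ, Fin.cons_zero]

lemma liftMat_succ_zero {n : ℕ} (B : Matrix (Fin n) (Fin n) ℝ) (i : Fin n) :
    liftMat B i.succ 0 = 0 := by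
  simp [liftMat, Matrix.of_apply, Fin.cons_succ, Fin.cons_zero]

lemma liftMat_succ_succ {n : ℕ} (B : Matrix (Fin n) (Fin n) ℝ) (i j : Fin n) :
    liftMat B i.succ j.succ = B i j := by
  simp [liftMat, Matrix.of_apply, Fin.cons_succ, Fin.cons_zero]

lemma liftMat_mulVec_zero {n : ℕ} (B : Matrix (Fin n) (Fin n) ℝ) (x : Fin (n+1) → ℝ) :
    (liftMat B).mulVec x 0 = x 0 := by
  rw [Matrix.mulVec, dotProduct, Fin.sum_univ_succ, liftMat_zero_zero]
  simp [liftMat_zero_succ]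

lemma liftMat_mulVec_succ {n : ℕ} (B : Matrix (Fin n) (Fin n) ℝ) (x : Fin (n+1) → ℝ) (i : Fin n) :
    (liftMat B).mulVec x i.succ = B.mulVec (fun j => x j.succ) i := by
  rw [Matrix.mulVec, dotProduct, Fin.sum_univ_succ, liftMat_succ_zero]
  simp only [liftMat_succ_succ]
  rw [Matrix.mulVec, dotProduct]
  simp

lemma liftMat_DS {n : ℕ} {B : Matrix (Fin n) (Fin n) ℝ} (hB : DoublyStochastic B) :
    DoublyStochastic (liftMat B) := by
  obtain ⟨hB0, hBr, hBc⟩ := hB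
  refine ⟨fun i j => ?_, fun i => ?_, fun j => ?_⟩
  · refine Fin.cases ?_ (fun i => ?_) i <;> refine Fin.cases ?_ (fun j => ?_) j
    · rw [liftMat_zero_zero]; norm_num
    · rw [liftMat_zero_succ]
    · rw [liftMat_succ_zero]
    · rw [liftMat_succ_succ]; exact hB0 i j
  · refine Fin.cases ?_ (fun i => ?_) i
    · rw [Fin.sum_univ_succ, liftMat_zero_zero]
      simp [liftMat_zero_succ]
    · rw [Fin.sum_univ_succ, liftMat_succ_zero]
      simp only [liftMat_succ_succ]
      simp [hBr i]
  · refine Fin.cases ?_ (fun j => ?_) j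
    · rw [Fin.sum_univ_succ, liftMat_zero_zero]
      simp [liftMat_succ_zero]
    · rw [Fin.sum_univ_succ, liftMat_zero_succ]
      simp only [liftMat_succ_succ]
      simp [hBc j]

lemma liftMat_Mon {n : ℕ} {B : Matrix (Fin n) (Fin n) ℝ} (hB : DoublyStochastic B)
    (hBm : MonotoneMatrix B) : MonotoneMatrix (liftMat B) := by
  obtain ⟨hB0, hBr, _⟩ := hB
  intro x hx0 hxs i j hij
  have hx0' : ∀ i : Fin n, 0 ≤ x i.succ := fun i => hx0 i.succ
  have hxs' : ∀ i j : Fin n, i ≤ j → x j.succ ≤ x i.succ := fun i j h =>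
    hxs i.succ j.succ (Fin.succ_le_succ_iff.mpr h)
  have hbd : ∀ i : Fin n, B.mulVec (fun j => x j.succ) i ≤ x 0 := by
    intro i
    rw [Matrix.mulVec, dotProduct]
    calc ∑ j, B i j * x j.succ ≤ ∑ j, B i j * x 0 := by
          apply Finset.sum_le_sum
          intro j _
          exact mul_le_mul_of_nonneg_left (hxs 0 j.succ (Fin.zero_le _)) (hB0 i j)
    _ = x 0 := by rw [← Finset.sum_mul, hBr i, one_mul]
  rcases Fin.eq_zero_or_eq_succ i with hi | ⟨i', rfl⟩
  · subst hi
    rw [liftMat_mulVec_zero]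
    rcases Fin.eq_zero_or_eq_succ j with hj | ⟨j', rfl⟩
    · subst hj; rw [liftMat_mulVec_zero]
    · rw [liftMat_mulVec_succ]; exact hbd j'
  · rcases Fin.eq_zero_or_eq_succ j with hj | ⟨j', rfl⟩
    · subst hj
      have h0 : i'.succ = 0 := le_antisymm hij (Fin.zero_le _)
      exact absurd h0 (Fin.succ_ne_zero i')
    · rw [liftMat_mulVec_succ, liftMat_mulVec_succ]
      exact hBm _ hx0' hxs' i' j' (Fin.succ_le_succ_iff.mp hij)

lemma sum_Iic_succ {n : ℕ} (f : Fin (n+1) → ℝ) (k : Fin n) :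
    ∑ i ∈ Finset.Iic k.succ, f i = f 0 + ∑ i ∈ Finset.Iic k, f i.succ := by
  rw [sum_Iic_eq, sum_Iic_eq, Fin.sum_univ_succ]
  simp [Fin.succ_le_succ_iff, Fin.zero_le]

lemma sum_le_card_mul {n : ℕ} (s : Finset (Fin n)) (f : Fin n → ℝ) (c : ℝ)
    (h : ∀ i ∈ s, f i ≤ c) : ∑ i ∈ s, f i ≤ s.card * c := by
  calc ∑ i ∈ s, f i ≤ ∑ _i ∈ s, c := Finset.sum_le_sum h
  _ = s.card * c := by rw [Finset.sum_const, nsmul_eq_mul]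


/-- monotone Hardy–Littlewood–Pólya theorem, doubly stochastic case. -/
theorem exists_doublyStochastic_monotone_of_majorize {n : ℕ} (a b : Fin n → ℝ)
    (ha0 : ∀ i, 0 ≤ a i) (hb0 : ∀ i, 0 ≤ b i)
    (haA : ∀ i j : Fin n, i ≤ j → a j ≤ a i) (hbA : ∀ i j : Fin n, i ≤ j → b j ≤ b i)
    (hmaj : ∀ k : Fin n, ∑ i ∈ Finset.Iic k, b i ≤ ∑ i ∈ Finset.Iic k, a i)
    (hsum : ∑ i, b i = ∑ i, a i) :
    ∃ A : Matrix (Fin n) (Fin n) ℝ,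
      DoublyStochastic A ∧ MonotoneMatrix A ∧ A.mulVec a = b := by
  induction n with
  | zero =>
    refine ⟨1, ⟨fun i => i.elim0, fun i => i.elim0, fun j => j.elim0⟩,
      fun x _ _ i => i.elim0, ?_⟩
    funext i
    exact i.elim0
  | succ n ih =>
    have hβa : b 0 ≤ a 0 := by
      have := hmaj 0
      rwa [Iic_zero_fin, Finset.sum_singleton, Finset.sum_singleton] at this
    have hβs : ∑ i, a i ≤ ((n:ℝ)+1) * b 0 := by
      rw [← hsum]
      calc ∑ i, b i ≤ ∑ _i : Fin (n+1), b 0 :=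
            Finset.sum_le_sum (fun i _ => hbA 0 i (Fin.zero_le i))
      _ = ((n:ℝ)+1) * b 0 := by
            rw [Finset.sum_const, Finset.card_univ, Fintype.card_fin, nsmul_eq_mul]
            push_cast; ring
    obtain ⟨M, hMDS, hMMon, hy0, hynn, hysort, hypre, hytot⟩ :=
      step a (b 0) ha0 haA (hb0 0) hβa hβs
    set y : Fin (n+1) → ℝ := M.mulVec a with hy
    set a' : Fin n → ℝ := fun i => y i.succ with ha'
    set b' : Fin n → ℝ := fun i => b i.succ with hb'
    have ha0' : ∀ i, 0 ≤ a' i := fun i => hynn i.succ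
    have hb0' : ∀ i, 0 ≤ b' i := fun i => hb0 i.succ
    have haA' : ∀ i j : Fin n, i ≤ j → a' j ≤ a' i := fun i j h =>
      hysort i.succ j.succ (Fin.succ_le_succ_iff.mpr h)
    have hbA' : ∀ i j : Fin n, i ≤ j → b' j ≤ b' i := fun i j h =>
      hbA i.succ j.succ (Fin.succ_le_succ_iff.mpr h)
    have hmaj' : ∀ k : Fin n, ∑ i ∈ Finset.Iic k, b' i ≤ ∑ i ∈ Finset.Iic k, a' i := by
      intro k
      have e1 : ∑ i ∈ Finset.Iic k.succ, b i = b 0 + ∑ i ∈ Finset.Iic k, b' i :=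
        sum_Iic_succ b k
      have e2 : ∑ i ∈ Finset.Iic k.succ, y i = y 0 + ∑ i ∈ Finset.Iic k, a' i :=
        sum_Iic_succ y k
      have hby : ∑ i ∈ Finset.Iic k.succ, b i ≤ ∑ i ∈ Finset.Iic k.succ, y i := by
        rcases hypre k.succ with h | h
        · rw [h]
          have : ∑ i ∈ Finset.Iic k.succ, b i ≤ ((Finset.Iic k.succ).card : ℝ) * b 0 :=
            sum_le_card_mul _ _ _ (fun i _ => hbA 0 i (Fin.zero_le i))
          refine le_trans this ?_
          rw [Fin.card_Iic]
          push_cast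
          exact le_of_eq rfl
        · rw [h]; exact hmaj k.succ
      rw [e1, e2, hy0] at hby
      linarith
    have hsum' : ∑ i, b' i = ∑ i, a' i := by
      have e1 : ∑ i, b i = b 0 + ∑ i, b' i := Fin.sum_univ_succ b
      have e2 : ∑ i, y i = y 0 + ∑ i, a' i := Fin.sum_univ_succ y
      rw [hytot, ← hsum] at e2
      rw [hy0] at e2
      linarith
    obtain ⟨B, hBDS, hBMon, hBab⟩ := ih a' b' ha0' hb0' haA' hbA' hmaj' hsum'
    refine ⟨liftMat B * M, DS_mul (liftMat_DS hBDS) hMDS,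
      Mon_mul (liftMat_Mon hBDS hBMon) hMMon hMDS.1, ?_⟩
    rw [← Matrix.mulVec_mulVec]
    funext i
    rcases Fin.eq_zero_or_eq_succ i with rfl | ⟨i', rfl⟩
    · rw [liftMat_mulVec_zero]
      exact hy0
    · rw [liftMat_mulVec_succ]
      have := congrFun hBab i'
      exact this
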